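/- Let h : {p^j : j ∈ ℤ} → ℂ be locally integrable as a radial function on Q_p^n and suppose ∑_{k=0}^∞ p^{-kn} |h(p^{-k} ‖x‖_p^{-1})| < ∞ for x ≠ 0. Then the (improper) radial inverse Fourier transform h̃(x) := ∑_{j∈ℤ} h(p^j) ∫_{‖ξ‖_p = p^j} χ_p(-x·ξ) d^n ξ converges for x ≠ 0 and equals (1-p^{-n}) ‖x‖_p^{-n} ∑_{k=0}^∞ p^{-kn} h(p^{-k}‖x‖_p^{-1}) - ‖x‖_p^{-n} h(p‖x‖_p^{-1}). -/

import Mathlib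

open MeasureTheory
open scoped ENNReal NNReal
-- test step and basic set lemmas
section
variable {p n : ℕ} [hp : Fact p.Prime]

def pball (p n : ℕ) [Fact p.Prime] (j : ℤ) : Set (Fin n → ℚ_[p]) := {ξ | ‖ξ‖ ≤ (p:ℝ)^j}

lemma pball_eq (j : ℤ) : pball p n j = Metric.closedBall 0 ((p:ℝ)^j) := by
  ext ξ; simp [pball, Metric.mem_closedBall, dist_zero_right]

lemma pball_compact (j : ℤ) : IsCompact (pball p n j) := by
  rw [pball_eq]; exact isCompact_closedBall _ _

lemma mem_pball_iff (j : ℤ) (ξ : Fin n → ℚ_[p]) : ξ ∈ pball p n j ↔ ∀ i, ‖ξ i‖ ≤ (p:ℝ)^j := by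
  have hp1 : (1:ℝ) < p := by exact_mod_cast hp.out.one_lt
  exact pi_norm_le_iff_of_nonneg (le_of_lt (zpow_pos (by linarith) j))

lemma norm_lt_pball {j : ℤ} {ξ : Fin n → ℚ_[p]} (h : ‖ξ‖ < (p:ℝ)^j) : ξ ∈ pball p n (j-1) := by
  have hp1 : (1:ℝ) < p := by exact_mod_cast hp.out.one_lt
  rw [mem_pball_iff]
  intro i
  have : ‖ξ i‖ < (p:ℝ)^j := lt_of_le_of_lt (norm_le_pi_norm ξ i) h
  rw [Padic.norm_le_pow_iff_norm_lt_pow_add_one, sub_add_cancel]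
  exact this

end

open Pointwise in
lemma pball_step {p n : ℕ} [hp : Fact p.Prime] (j : ℤ) :
    pball p n (j+1) = ⋃ c : Fin n → Fin p,
      ((fun i => ((c i : ℕ) : ℚ_[p]) * (p:ℚ_[p])^(-(j+1))) +ᵥ pball p n j) := by
  have hp0 : (0:ℝ) < p := by exact_mod_cast hp.out.pos
  ext y
  simp only [Set.mem_iUnion, Set.mem_vadd_set_iff_neg_vadd_mem]
  constructor
  · intro hy
    have hy' := (mem_pball_iff _ _).mp hy
    have key : ∀ i : Fin n, ∃ c : Fin p,
        ‖y i - ((c : ℕ) : ℚ_[p]) * (p:ℚ_[p])^(-(j+1))‖ ≤ (p:ℝ)^j := by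
      intro i
      have hz : ‖y i * (p:ℚ_[p])^(j+1)‖ ≤ 1 := by
        rw [norm_mul, Padic.norm_p_zpow]
        calc ‖y i‖ * (p:ℝ)^(-(j+1)) ≤ (p:ℝ)^(j+1) * (p:ℝ)^(-(j+1)) := by
              apply mul_le_mul_of_nonneg_right (hy' i) (le_of_lt (zpow_pos hp0 _))
          _ = 1 := by rw [← zpow_add₀ (ne_of_gt hp0), show j+1 + -(j+1) = 0 from by ring, zpow_zero]
      set w : ℤ_[p] := ⟨y i * (p:ℚ_[p])^(j+1), hz⟩ with hw
      refine ⟨⟨w.appr 1, by simpa using w.appr_lt 1⟩, ?_⟩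
      have hspec : ‖w - (w.appr 1 : ℤ_[p])‖ ≤ (p:ℝ)^(-(1:ℕ):ℤ) := by
        rw [PadicInt.norm_le_pow_iff_mem_span_pow]; simpa using PadicInt.appr_spec 1 w
      have hspec' : ‖(y i * (p:ℚ_[p])^(j+1) - (w.appr 1 : ℚ_[p]))‖ ≤ (p:ℝ)^(-(1:ℕ):ℤ) := by
        have : ((w - (w.appr 1 : ℤ_[p]) : ℤ_[p]) : ℚ_[p]) = y i * (p:ℚ_[p])^(j+1) - (w.appr 1 : ℚ_[p]) := by
          rw [PadicInt.coe_sub, PadicInt.coe_natCast, hw]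
        rw [← this]; exact hspec
      have heq : y i - ((w.appr 1 : ℕ) : ℚ_[p]) * (p:ℚ_[p])^(-(j+1))
          = (y i * (p:ℚ_[p])^(j+1) - (w.appr 1 : ℚ_[p])) * (p:ℚ_[p])^(-(j+1)) := by
        have hpne : ((p:ℚ_[p])) ≠ 0 := by exact_mod_cast hp.out.ne_zero
        have hone : (p:ℚ_[p])^(j+1) * (p:ℚ_[p])^(-(j+1)) = 1 := by
          rw [← zpow_add₀ hpne, show j+1 + -(j+1) = 0 from by ring, zpow_zero]
        rw [sub_mul, mul_assoc, hone, mul_one]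
      rw [heq, norm_mul, Padic.norm_p_zpow]
      calc ‖y i * (p:ℚ_[p])^(j+1) - (w.appr 1 : ℚ_[p])‖ * (p:ℝ)^(-(-(j+1)))
          ≤ (p:ℝ)^(-(1:ℕ):ℤ) * (p:ℝ)^(j+1) := by
            rw [neg_neg]
            exact mul_le_mul_of_nonneg_right hspec' (le_of_lt (zpow_pos hp0 _))
        _ = (p:ℝ)^j := by rw [← zpow_add₀ (ne_of_gt hp0)]; norm_num
    choose c hc using key
    refine ⟨c, ?_⟩
    rw [mem_pball_iff]
    intro i
    simpa [sub_eq_neg_add] using hc i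
  · rintro ⟨c, hc⟩
    rw [mem_pball_iff]
    intro i
    have hci := (mem_pball_iff _ _).mp hc i
    have h1 : ‖((c i : ℕ) : ℚ_[p]) * (p:ℚ_[p])^(-(j+1))‖ ≤ (p:ℝ)^(j+1) := by
      rw [norm_mul, Padic.norm_p_zpow, neg_neg]
      calc ‖((c i : ℕ) : ℚ_[p])‖ * (p:ℝ)^(j+1) ≤ 1 * (p:ℝ)^(j+1) := by
            apply mul_le_mul_of_nonneg_right _ (le_of_lt (zpow_pos hp0 _))
            exact_mod_cast Padic.norm_int_le_one ((c i : ℕ) : ℤ)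
        _ = (p:ℝ)^(j+1) := one_mul _
    have h2 : ‖(-(fun i => ((c i : ℕ) : ℚ_[p]) * (p:ℚ_[p])^(-(j+1))) + y) i‖ ≤ (p:ℝ)^j := hci
    have : y i = ((c i : ℕ) : ℚ_[p]) * (p:ℚ_[p])^(-(j+1)) + ((-(fun i => ((c i : ℕ) : ℚ_[p]) * (p:ℚ_[p])^(-(j+1))) + y) i) := by
      simp
    rw [this]
    refine le_trans (IsUltrametricDist.norm_add_le_max _ _) (max_le h1 (le_trans h2 ?_))
    exact zpow_le_zpow_right₀ (by exact_mod_cast hp.out.one_le) (by linarith)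

open Pointwise in
lemma pball_pairwise {p n : ℕ} [hp : Fact p.Prime] (j : ℤ) :
    Pairwise (Function.onFun Disjoint
      (fun c : Fin n → Fin p =>
        ((fun i => ((c i : ℕ) : ℚ_[p]) * (p:ℚ_[p])^(-(j+1))) +ᵥ pball p n j))) := by
  have hp0 : (0:ℝ) < p := by exact_mod_cast hp.out.pos
  intro c c' hcc
  rw [Function.onFun, Set.disjoint_left]
  rintro y ⟨ξ, hξ, rfl⟩ ⟨ξ', hξ', hyy⟩
  obtain ⟨i, hi⟩ : ∃ i, c i ≠ c' i := by
    by_contra hco; push_neg at hco; exact hcc (funext hco)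
  have hξi := (mem_pball_iff _ _).mp hξ i
  have hξi' := (mem_pball_iff _ _).mp hξ' i
  have hcoord : ((c' i : ℕ) : ℚ_[p]) * (p:ℚ_[p])^(-(j+1)) + ξ' i
      = ((c i : ℕ) : ℚ_[p]) * (p:ℚ_[p])^(-(j+1)) + ξ i := congrFun hyy i
  set k : ℤ := ((c i : ℕ) : ℤ) - ((c' i : ℕ) : ℤ) with hk
  have hdiff : ((k : ℚ_[p])) * (p:ℚ_[p])^(-(j+1)) = ξ' i - ξ i := by
    push_cast [hk]
    linear_combination -hcoord
  have hnormr : ‖ξ' i - ξ i‖ ≤ (p:ℝ)^j := by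
    have h := IsUltrametricDist.norm_add_le_max (ξ' i) (-(ξ i))
    rw [← sub_eq_add_neg, norm_neg] at h
    exact le_trans h (max_le hξi' hξi)
  have h1 : ((c i : ℕ) : ℤ) < p := by exact_mod_cast (c i).isLt
  have h2 : ((c' i : ℕ) : ℤ) < p := by exact_mod_cast (c' i).isLt
  have hk0 : k ≠ 0 := by
    intro h0
    exact hi (Fin.ext (by omega))
  have hnd : ¬ ((p:ℤ) ∣ k) := by
    intro hdvd
    rcases lt_trichotomy k 0 with hlt | h0 | hgt
    · have := Int.le_of_dvd (by omega) (dvd_neg.mpr hdvd); omega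
    · exact hk0 h0
    · have := Int.le_of_dvd hgt hdvd; omega
  have hnorm1 : ‖(k : ℚ_[p])‖ = 1 := by
    rcases lt_or_eq_of_le (Padic.norm_int_le_one (p := p) k) with hlt | heq
    · exact absurd (Padic.norm_intCast_lt_one_iff.mp hlt) hnd
    · exact heq
  have hval : ‖((k : ℚ_[p])) * (p:ℚ_[p])^(-(j+1))‖ = (p:ℝ)^(j+1) := by
    rw [norm_mul, hnorm1, one_mul, Padic.norm_p_zpow, neg_neg]
  rw [hdiff] at hval
  have hle : (p:ℝ)^(j+1) ≤ (p:ℝ)^j := hval ▸ hnormr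
  have hlt : (p:ℝ)^j < (p:ℝ)^(j+1) :=
    zpow_lt_zpow_right₀ (by exact_mod_cast hp.out.one_lt) (by omega)
  linarith

section meas
variable {p n : ℕ} [hp : Fact p.Prime]
  [MeasurableSpace (Fin n → ℚ_[p])] [BorelSpace (Fin n → ℚ_[p])]
  (μ : Measure (Fin n → ℚ_[p])) [μ.IsAddHaarMeasure]

lemma pball_measurable (j : ℤ) : MeasurableSet (pball p n j) := by
  rw [pball_eq]; exact measurableSet_closedBall

open Pointwise in
lemma pball_measure_step (j : ℤ) :
    μ (pball p n (j+1)) = (p : ℝ≥0∞)^(n : ℕ) * μ (pball p n j) := by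
  rw [pball_step (p := p) (n := n) j]
  rw [measure_iUnion (pball_pairwise j) (fun c => by
    have : ((fun i => ((c i : ℕ) : ℚ_[p]) * (p:ℚ_[p])^(-(j+1))) +ᵥ pball p n j)
        = (fun ξ : Fin n → ℚ_[p] => -(fun i => ((c i : ℕ) : ℚ_[p]) * (p:ℚ_[p])^(-(j+1))) + ξ) ⁻¹' pball p n j := by
      ext ξ
      simp [Set.mem_vadd_set_iff_neg_vadd_mem, vadd_eq_add]
    rw [this]
    exact (pball_measurable j).preimage (measurable_const_add _))]
  have hv : ∀ c : Fin n → Fin p,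
      μ ((fun i => ((c i : ℕ) : ℚ_[p]) * (p:ℚ_[p])^(-(j+1))) +ᵥ pball p n j) = μ (pball p n j) := by
    intro c
    exact measure_vadd μ _ _
  simp only [hv, tsum_fintype, Finset.sum_const, Finset.card_univ]
  rw [Fintype.card_fun]
  simp [nsmul_eq_mul]
lemma pball_measure (hμ : μ {x : Fin n → ℚ_[p] | ‖x‖ ≤ 1} = 1) (j : ℤ) :
    μ (pball p n j) = (p : ℝ≥0∞) ^ ((n : ℤ) * j) := by
  have hp0 : (p : ℝ≥0∞) ≠ 0 := by exact_mod_cast hp.out.ne_zero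
  have hpt : (p : ℝ≥0∞) ≠ ⊤ := ENNReal.natCast_ne_top p
  have hbase : μ (pball p n 0) = 1 := by
    have : pball p n (0:ℤ) = {x : Fin n → ℚ_[p] | ‖x‖ ≤ 1} := by
      ext ξ; simp [pball]
    rw [this, hμ]
  induction j using Int.induction_on with
  | zero => simpa using hbase
  | succ k ih =>
    rw [pball_measure_step, ih, ← zpow_natCast (p:ℝ≥0∞) n, ← ENNReal.zpow_add hp0 hpt]
    congr 1
    push_cast
    ring
  | pred k ih =>
    have hstep := pball_measure_step μ (-((k:ℤ)+1))
    rw [show (-((k:ℤ)+1)) + 1 = -(k:ℤ) from by ring, ih] at hstep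
    have hcan : μ (pball p n (-((k:ℤ)+1)))
        = ((p:ℝ≥0∞)^(n:ℕ))⁻¹ * ((p:ℝ≥0∞)^(n:ℕ) * μ (pball p n (-((k:ℤ)+1)))) := by
      rw [← mul_assoc, ENNReal.inv_mul_cancel (pow_ne_zero _ hp0) (ENNReal.pow_ne_top hpt), one_mul]
    rw [show (-(k:ℤ) - 1) = -((k:ℤ)+1) from by ring, hcan, ← hstep, ← zpow_natCast (p:ℝ≥0∞) n,
      ← ENNReal.zpow_neg, ← ENNReal.zpow_add hp0 hpt]
    congr 1
    push_cast
    ring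
lemma pball_subset (j : ℤ) : pball p n (j-1) ⊆ pball p n j := by
  intro ξ hξ
  have h1 : ‖ξ‖ ≤ (p:ℝ)^(j-1) := hξ
  show ‖ξ‖ ≤ (p:ℝ)^j
  exact le_trans h1 (zpow_le_zpow_right₀ (by exact_mod_cast hp.out.one_le) (by omega))

lemma sphere_eq_diff (j : ℤ) :
    {ξ : Fin n → ℚ_[p] | ‖ξ‖ = (p : ℝ)^j} = pball p n j \ pball p n (j-1) := by
  have hp1 : (1:ℝ) < p := by exact_mod_cast hp.out.one_lt
  ext ξ
  simp only [Set.mem_setOf_eq, Set.mem_diff]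
  constructor
  · intro he
    refine ⟨le_of_eq he, fun hle => ?_⟩
    have hlt : (p:ℝ)^(j-1) < (p:ℝ)^j := zpow_lt_zpow_right₀ hp1 (by omega)
    have : ‖ξ‖ ≤ (p:ℝ)^(j-1) := hle
    rw [he] at this
    linarith
  · rintro ⟨h1, h2⟩
    have h1' : ‖ξ‖ ≤ (p:ℝ)^j := h1
    rcases lt_or_eq_of_le h1' with hlt | heq
    · exact absurd (norm_lt_pball hlt) h2
    · exact heq

lemma integrand_continuous (χ : AddChar ℚ_[p] ℂ) (hχc : Continuous χ) (x : Fin n → ℚ_[p]) :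
    Continuous (fun ξ : Fin n → ℚ_[p] => χ (-(∑ i, x i * ξ i))) := by
  apply hχc.comp
  apply Continuous.neg
  exact continuous_finset_sum _ (fun i _ => continuous_const.mul (continuous_apply i))

lemma pball_integral
    (hμ : μ {x : Fin n → ℚ_[p] | ‖x‖ ≤ 1} = 1)
    (χ : AddChar ℚ_[p] ℂ) (hχc : Continuous χ)
    (hχ1 : ∀ y : ℚ_[p], ‖y‖ ≤ 1 → χ y = 1)
    (hχ2 : ∃ y : ℚ_[p], ‖y‖ = p ∧ χ y ≠ 1)
    (x : Fin n → ℚ_[p]) (m : ℤ) (hm : ‖x‖ = (p : ℝ) ^ m)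
    (hn : 0 < n) (j : ℤ) :
    ∫ ξ in pball p n j, χ (-(∑ i, x i * ξ i)) ∂μ
      = if m ≤ -j then (((p:ℝ)^((n:ℤ)*j) : ℝ) : ℂ) else 0 := by
  have hp0 : (0:ℝ) < p := by exact_mod_cast hp.out.pos
  have hp1 : (1:ℝ) < p := by exact_mod_cast hp.out.one_lt
  by_cases hcase : m ≤ -j
  · rw [if_pos hcase]
    have h1 : Set.EqOn (fun ξ : Fin n → ℚ_[p] => χ (-(∑ i, x i * ξ i)))
        (fun _ => (1:ℂ)) (pball p n j) := by
      intro ξ hξ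
      have hsum : ‖∑ i, x i * ξ i‖ ≤ 1 := by
        apply IsUltrametricDist.norm_sum_le_of_forall_le_of_nonneg zero_le_one
        intro i _
        rw [norm_mul]
        calc ‖x i‖ * ‖ξ i‖ ≤ (p:ℝ)^m * (p:ℝ)^j := by
              apply mul_le_mul (le_trans (norm_le_pi_norm x i) (le_of_eq hm))
                ((mem_pball_iff j ξ).mp hξ i) (norm_nonneg _)
                (le_of_lt (zpow_pos hp0 m))
          _ = (p:ℝ)^(m+j) := (zpow_add₀ (ne_of_gt hp0) m j).symm
          _ ≤ (p:ℝ)^(0:ℤ) := zpow_le_zpow_right₀ (le_of_lt hp1) (by omega)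
          _ = 1 := zpow_zero _
      simp only
      apply hχ1
      rwa [norm_neg]
    have htr : ((p:ℝ≥0∞)^((n:ℤ)*j)).toReal = (p:ℝ)^((n:ℤ)*j) := by
      rw [show (p:ℝ≥0∞) = ((p:ℝ≥0):ℝ≥0∞) from by norm_cast,
        ← ENNReal.coe_zpow (by exact_mod_cast hp.out.ne_zero), ENNReal.coe_toReal,
        NNReal.coe_zpow, NNReal.coe_natCast]
    rw [setIntegral_congr_fun (pball_measurable j) h1, setIntegral_const,
      measureReal_def, pball_measure μ hμ j, htr, Complex.real_smul, mul_one]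
  · rw [if_neg hcase]
    push_neg at hcase
    have hne : Nonempty (Fin n) := ⟨⟨0, hn⟩⟩
    obtain ⟨i₀, hi₀⟩ := Finite.exists_max (fun i => ‖x i‖)
    have hxi : ‖x i₀‖ = (p:ℝ)^m := by
      refine le_antisymm (le_trans (norm_le_pi_norm x i₀) (le_of_eq hm)) ?_
      rw [← hm]
      exact (pi_norm_le_iff_of_nonneg (norm_nonneg _)).mpr hi₀
    have hxi0 : x i₀ ≠ 0 := by
      intro h0
      rw [h0, norm_zero] at hxi
      exact absurd hxi.symm (ne_of_gt (zpow_pos hp0 m))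
    obtain ⟨y, hy, hyne⟩ := hχ2
    set t : ℚ_[p] := -(y / x i₀) with ht
    set v : Fin n → ℚ_[p] := Pi.single i₀ t with hv
    have hvt : ‖t‖ ≤ (p:ℝ)^j := by
      rw [ht, norm_neg, norm_div, hy, hxi,
        show (p:ℝ)/(p:ℝ)^m = (p:ℝ)^(1-m) from by rw [zpow_sub₀ (ne_of_gt hp0), zpow_one]]
      exact zpow_le_zpow_right₀ (le_of_lt hp1) (by omega)
    have hvmem : v ∈ pball p n j := by
      rw [mem_pball_iff]
      intro i
      rw [hv, Pi.single_apply]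
      split
      · exact hvt
      · simp [le_of_lt (zpow_pos hp0 j)]
    have hxv : ∑ i, x i * v i = -y := by
      rw [hv]
      rw [Finset.sum_eq_single i₀]
      · rw [Pi.single_eq_same, ht, mul_neg, mul_comm, div_mul_cancel₀ _ hxi0]
      · intro b _ hb
        rw [Pi.single_eq_of_ne hb, mul_zero]
      · intro hb
        exact absurd (Finset.mem_univ i₀) hb
    have hpre : (fun ξ : Fin n → ℚ_[p] => v + ξ) ⁻¹' pball p n j = pball p n j := by
      ext ξ
      simp only [Set.mem_preimage]
      constructor
      · intro hξ
        rw [mem_pball_iff]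
        intro i
        have heq : ξ i = -(v i) + (v i + ξ i) := by ring
        rw [heq]
        refine le_trans (IsUltrametricDist.norm_add_le_max _ _) (max_le ?_ ?_)
        · rw [norm_neg]; exact (mem_pball_iff j v).mp hvmem i
        · exact (mem_pball_iff j _).mp hξ i
      · intro hξ
        rw [mem_pball_iff]
        intro i
        refine le_trans (IsUltrametricDist.norm_add_le_max _ _) (max_le ?_ ?_)
        · exact (mem_pball_iff j v).mp hvmem i
        · exact (mem_pball_iff j _).mp hξ i
    have fc := integrand_continuous (p := p) (n := n) χ hχc x
    set f : (Fin n → ℚ_[p]) → ℂ := fun ξ => χ (-(∑ i, x i * ξ i)) with hf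
    have hmap : μ.map (fun ξ : Fin n → ℚ_[p] => v + ξ) = μ :=
      map_add_left_eq_self μ v
    have step1 : ∫ ξ in pball p n j, f ξ ∂μ
        = ∫ ξ in pball p n j, f (v + ξ) ∂μ := by
      conv_lhs => rw [← hmap]
      rw [setIntegral_map (pball_measurable j) fc.aestronglyMeasurable
        (measurable_const_add v).aemeasurable, hpre]
    have step2 : ∀ ξ : Fin n → ℚ_[p], f (v + ξ) = χ y * f ξ := by
      intro ξ
      have hsplit : -(∑ i, x i * (v + ξ) i) = y + -(∑ i, x i * ξ i) := by
        simp only [Pi.add_apply, mul_add]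
        rw [Finset.sum_add_distrib, hxv]
        ring
      rw [hf]
      simp only
      rw [hsplit, AddChar.map_add_eq_mul]
    have hI : ∫ ξ in pball p n j, f ξ ∂μ = χ y * ∫ ξ in pball p n j, f ξ ∂μ := by
      conv_lhs => rw [step1]
      simp_rw [step2]
      rw [integral_const_mul]
    have h0 : (1 - χ y) * ∫ ξ in pball p n j, f ξ ∂μ = 0 := by
      rw [sub_mul, one_mul, ← hI, sub_self]
    rcases mul_eq_zero.mp h0 with hc | hc
    · exact absurd (by linear_combination -hc : χ y = 1) hyne
    · exact hc

lemma pball_integrableOn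
    (χ : AddChar ℚ_[p] ℂ) (hχc : Continuous χ) (x : Fin n → ℚ_[p]) (j : ℤ) :
    IntegrableOn (fun ξ : Fin n → ℚ_[p] => χ (-(∑ i, x i * ξ i))) (pball p n j) μ :=
  (integrand_continuous (p := p) (n := n) χ hχc x).continuousOn.integrableOn_compact
    (pball_compact j)

lemma sphere_integral
    (hμ : μ {x : Fin n → ℚ_[p] | ‖x‖ ≤ 1} = 1)
    (χ : AddChar ℚ_[p] ℂ) (hχc : Continuous χ)
    (hχ1 : ∀ y : ℚ_[p], ‖y‖ ≤ 1 → χ y = 1)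
    (hχ2 : ∃ y : ℚ_[p], ‖y‖ = p ∧ χ y ≠ 1)
    (x : Fin n → ℚ_[p]) (m : ℤ) (hm : ‖x‖ = (p : ℝ) ^ m)
    (hn : 0 < n) (j : ℤ) :
    ∫ ξ in {ξ : Fin n → ℚ_[p] | ‖ξ‖ = (p : ℝ)^j}, χ (-(∑ i, x i * ξ i)) ∂μ
      = (if m ≤ -j then (((p:ℝ)^((n:ℤ)*j) : ℝ) : ℂ) else 0)
        - (if m ≤ -(j-1) then (((p:ℝ)^((n:ℤ)*(j-1)) : ℝ) : ℂ) else 0) := by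
  rw [sphere_eq_diff,
    integral_diff (pball_measurable (j-1)) (pball_integrableOn μ χ hχc x j) (pball_subset j),
    pball_integral μ hμ χ hχc hχ1 hχ2 x m hm hn j,
    pball_integral μ hμ χ hχc hχ1 hχ2 x m hm hn (j-1)]

end meas

/-- Let `h(p^j)` be a radial, locally integrable function on `ℚ_p^n` with
`∑_{k≥0} p^{-kn}|h(p^{-k}‖x‖_p⁻¹)| < ∞` for `x ≠ 0`. Then the improper radial inverse Fourier
transform `h̃(x) = ∑_{j∈ℤ} h(p^j) ∫_{‖ξ‖=p^j} χ_p(-x·ξ) d^nξ` converges and equals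
`(1-p^{-n})‖x‖_p^{-n} ∑_{k≥0} p^{-kn} h(p^{-k}‖x‖_p⁻¹) - ‖x‖_p^{-n} h(p‖x‖_p⁻¹)`.
Here `h : ℤ → ℂ` records the radial values `h j = h(p^j)` and `‖x‖_p = p^m`. -/
theorem stmt17 (p n : ℕ) [Fact p.Prime] (hn : 0 < n)
    [MeasurableSpace (Fin n → ℚ_[p])] [BorelSpace (Fin n → ℚ_[p])]
    (μ : Measure (Fin n → ℚ_[p])) [μ.IsAddHaarMeasure]
    (hμ : μ {x : Fin n → ℚ_[p] | ‖x‖ ≤ 1} = 1)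
    (χ : AddChar ℚ_[p] ℂ) (hχc : Continuous χ)
    (hχnorm : ∀ y : ℚ_[p], ‖χ y‖ = 1)
    (hχ1 : ∀ y : ℚ_[p], ‖y‖ ≤ 1 → χ y = 1)
    (hχ2 : ∃ y : ℚ_[p], ‖y‖ = p ∧ χ y ≠ 1)
    (h : ℤ → ℂ)
    (x : Fin n → ℚ_[p]) (hx : x ≠ 0) (m : ℤ) (hm : ‖x‖ = (p : ℝ) ^ m)
    (hsum : Summable fun k : ℕ => (p : ℝ) ^ (-((n * k : ℕ) : ℤ)) * ‖h (-(k : ℤ) - m)‖) :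
    HasSum
      (fun j : ℤ =>
        h j * ∫ ξ in {ξ : Fin n → ℚ_[p] | ‖ξ‖ = (p : ℝ) ^ j}, χ (-(∑ i, x i * ξ i)) ∂μ)
      ((((1 - (p : ℝ) ^ (-(n : ℤ))) * ‖x‖ ^ (-(n : ℤ)) : ℝ) : ℂ) *
          (∑' k : ℕ, (((p : ℝ) ^ (-((n * k : ℕ) : ℤ)) : ℝ) : ℂ) * h (-(k : ℤ) - m)) -
        ((‖x‖ ^ (-(n : ℤ)) : ℝ) : ℂ) * h (1 - m)) := by
  have hq0 : ((p:ℝ)) ≠ 0 := by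
    have : (0:ℝ) < p := by exact_mod_cast (Fact.out : p.Prime).pos
    exact ne_of_gt this
  set q : ℝ := (p : ℝ) with hqdef
  set f : ℤ → ℂ := fun j =>
    h j * ∫ ξ in {ξ : Fin n → ℚ_[p] | ‖ξ‖ = (p : ℝ) ^ j}, χ (-(∑ i, x i * ξ i)) ∂μ with hfdef
  have hS : ∀ j : ℤ, f j = h j *
      ((if m ≤ -j then ((q^((n:ℤ)*j) : ℝ) : ℂ) else 0)
        - (if m ≤ -(j-1) then ((q^((n:ℤ)*(j-1)) : ℝ) : ℂ) else 0)) := by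
    intro j
    rw [hfdef]
    simp only
    rw [sphere_integral μ hμ χ hχc hχ1 hχ2 x m hm hn j]
  -- the norm of x, as powers of q
  have hx1 : ‖x‖^(-(n:ℤ)) = q^((n:ℤ)*(-m)) := by
    rw [hm, ← zpow_mul]
    congr 1
    ring
  -- enumeration of the support
  set e : ℕ → ℤ := fun k => if k = 0 then 1 - m else -((k : ℤ) - 1) - m with hedef
  have he0 : e 0 = 1 - m := by simp [hedef]
  have heS : ∀ k : ℕ, e (k+1) = -(k:ℤ) - m := by
    intro k
    simp only [hedef, if_neg (Nat.succ_ne_zero k)]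
    push_cast
    ring
  have hinj : Function.Injective e := by
    intro a b hab
    simp only [hedef] at hab
    split_ifs at hab <;> omega
  have hzero : ∀ j : ℤ, j ∉ Set.range e → f j = 0 := by
    intro j hj
    have hj1 : j ≠ 1 - m := fun hc => hj ⟨0, he0.trans hc.symm⟩
    have hj2 : ∀ k : ℕ, j ≠ -(k:ℤ) - m := fun k hc => hj ⟨k+1, (heS k).trans hc.symm⟩
    have hjgt : 1 - m < j := by
      by_contra hle
      push_neg at hle
      rcases lt_or_eq_of_le hle with hlt | heq
      · have hk : j ≤ -m := by omega
        have : j = -(((-(j+m)).toNat : ℤ)) - m := by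
          rw [Int.toNat_of_nonneg (by omega)]
          ring
        exact hj2 _ this
      · exact hj1 heq
    rw [hS j, if_neg (by omega), if_neg (by omega), sub_zero, mul_zero]
  rw [← Function.Injective.hasSum_iff hinj hzero]
  -- the series over ℕ
  set g : ℕ → ℂ := fun k => ((q ^ (-((n * k : ℕ) : ℤ)) : ℝ) : ℂ) * h (-(k : ℤ) - m) with hgdef
  have hgsum : Summable g := by
    apply Summable.of_norm
    convert hsum using 2 with k
    rw [hgdef]
    simp only [norm_mul, Complex.norm_real, Real.norm_eq_abs]
    rw [abs_of_pos (zpow_pos (by positivity) _)]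
  set C : ℂ := (((1 - q ^ (-(n : ℤ))) * ‖x‖ ^ (-(n : ℤ)) : ℝ) : ℂ) with hCdef
  have hmulsum : HasSum (fun k => C * g k) (C * ∑' k, g k) := hgsum.hasSum.mul_left C
  have hshift : ∀ k : ℕ, (f ∘ e) (k + 1) = C * g k := by
    intro k
    rw [Function.comp_apply, heS k, hS, if_pos (by omega), if_pos (by omega)]
    have hre : (1 - q^(-(n:ℤ))) * ‖x‖^(-(n:ℤ)) * q ^ (-((n * k : ℕ) : ℤ))
        = q^((n:ℤ)*(-(k:ℤ)-m)) - q^((n:ℤ)*(-(k:ℤ)-m-1)) := by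
      rw [hx1]
      rw [show (1 - q^(-(n:ℤ))) * q^((n:ℤ)*(-m)) * q ^ (-((n * k : ℕ) : ℤ))
          = q^((n:ℤ)*(-m)) * q ^ (-((n * k : ℕ) : ℤ))
            - q^(-(n:ℤ)) * (q^((n:ℤ)*(-m)) * q ^ (-((n * k : ℕ) : ℤ))) from by ring]
      rw [← zpow_add₀ hq0, ← zpow_add₀ hq0]
      congr 1 <;> · congr 1; push_cast; ring
    have hreC : ((q^((n:ℤ)*(-(k:ℤ)-m)) : ℝ) : ℂ) - ((q^((n:ℤ)*(-(k:ℤ)-m-1)) : ℝ) : ℂ)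
        = (((1 - q^(-(n:ℤ))) * ‖x‖^(-(n:ℤ)) : ℝ) : ℂ) * ((q ^ (-((n * k : ℕ) : ℤ)) : ℝ) : ℂ) := by
      rw [← Complex.ofReal_sub, ← Complex.ofReal_mul, ← hre]
    rw [hreC, hCdef, hgdef]
    ring
  have hstep : HasSum (fun k : ℕ => (f ∘ e) (k + 1)) (C * ∑' k, g k) := by
    simpa only [hshift] using hmulsum
  have hfin := (hasSum_nat_add_iff (f := f ∘ e) 1).mp hstep
  rw [Finset.range_one, Finset.sum_singleton] at hfin
  have hfe0 : (f ∘ e) 0 = -(((‖x‖ ^ (-(n : ℤ)) : ℝ) : ℂ) * h (1 - m)) := by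
    rw [Function.comp_apply, he0, hS, if_neg (by omega), if_pos (by omega), zero_sub]
    rw [hx1]
    rw [show (1 - m - 1 : ℤ) = -m from by ring]
    ring
  rw [hfe0] at hfin
  rw [sub_eq_add_neg]
  convert hfin using 1
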